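/- Let α > d/2, σ > 0, and define v_ℓ = C_ℓ σ²/(n C_ℓ + σ²) with C_ℓ = (1 + ℓ²)^{-α}. Then there is a constant c = c(d, α, σ) such that for L_n = ⌈n^{1/(2α+d)}⌉, Σ_{ℓ=0}^{L_n} (ℓ+1)^{d-1} v_ℓ ≤ c n^{-2α/(2α+d)} for all n ≥ 1. -/

import Mathlib

/-- Posterior variance bound in the truncated spherical Gaussian sequence
model: with `C_ℓ = (1+ℓ²)^{-α}` and posterior variances
`v_ℓ = C_ℓσ²/(nC_ℓ+σ²)`, for the truncation level `L_n = ⌈n^{1/(2α+d)}⌉`,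
`Σ_{ℓ=0}^{L_n} (ℓ+1)^{d-1} v_ℓ ≤ c n^{-2α/(2α+d)}` for all `n ≥ 1`. -/
theorem posterior_variance_bound (d : ℕ) (hd : 1 ≤ d) (α σ : ℝ)
    (hα : (d : ℝ) / 2 < α) (hσ : 0 < σ) :
    ∃ c : ℝ, 0 < c ∧ ∀ n : ℕ, 1 ≤ n →
      (∑ ℓ ∈ Finset.range (⌈(n : ℝ) ^ (1 / (2 * α + d))⌉₊ + 1),
          ((ℓ : ℝ) + 1) ^ (d - 1) *
            ((1 + (ℓ : ℝ) ^ 2) ^ (-α) * σ ^ 2 /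
              ((n : ℝ) * (1 + (ℓ : ℝ) ^ 2) ^ (-α) + σ ^ 2)))
        ≤ c * (n : ℝ) ^ (-(2 * α) / (2 * α + d)) := by
  have hd' : (1:ℝ) ≤ d := by exact_mod_cast hd
  have hα0 : 0 < α := lt_of_le_of_lt (by linarith) hα
  set s : ℝ := 2 * α + d with hs
  have hs0 : 0 < s := by rw [hs]; linarith
  refine ⟨3 ^ d * σ ^ 2, by positivity, ?_⟩
  intro n hn
  have hn0 : (0:ℝ) < n := by exact_mod_cast hn
  have hn1 : (1:ℝ) ≤ n := by exact_mod_cast hn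
  set x : ℝ := (n:ℝ) ^ (1 / s) with hxdef
  have hx1 : 1 ≤ x := Real.one_le_rpow hn1 (by positivity)
  set L : ℕ := ⌈x⌉₊ with hLdef
  have hL : (L:ℝ) + 1 ≤ 3 * x := by
    have h := Nat.ceil_lt_add_one (le_trans zero_le_one hx1)
    have : (L:ℝ) < x + 1 := h
    linarith
  have hterm : ∀ ℓ ∈ Finset.range (L+1),
      ((ℓ : ℝ) + 1) ^ (d - 1) *
            ((1 + (ℓ : ℝ) ^ 2) ^ (-α) * σ ^ 2 /
              ((n : ℝ) * (1 + (ℓ : ℝ) ^ 2) ^ (-α) + σ ^ 2))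
        ≤ ((L:ℝ)+1)^(d-1) * (σ^2 / n) := by
    intro ℓ hℓ
    have hℓL : ℓ ≤ L := Nat.lt_succ_iff.mp (Finset.mem_range.mp hℓ)
    have hC : (0:ℝ) < (1+(ℓ:ℝ)^2)^(-α) := Real.rpow_pos_of_pos (by positivity) _
    have h1 : ((ℓ:ℝ)+1)^(d-1) ≤ ((L:ℝ)+1)^(d-1) := by
      apply pow_le_pow_left₀ (by positivity)
      have : (ℓ:ℝ) ≤ L := by exact_mod_cast hℓL
      linarith
    have h2 : (1+(ℓ:ℝ)^2)^(-α) * σ^2 / ((n:ℝ)*(1+(ℓ:ℝ)^2)^(-α)+σ^2) ≤ σ^2 / n := by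
      rw [div_le_div_iff₀ (by positivity) hn0]
      nlinarith [sq_nonneg (σ^2), hC, hn0]
    exact mul_le_mul h1 h2 (by positivity) (by positivity)
  have hsum : (∑ ℓ ∈ Finset.range (L + 1),
      ((ℓ : ℝ) + 1) ^ (d - 1) *
            ((1 + (ℓ : ℝ) ^ 2) ^ (-α) * σ ^ 2 /
              ((n : ℝ) * (1 + (ℓ : ℝ) ^ 2) ^ (-α) + σ ^ 2)))
      ≤ ((L:ℝ)+1) * (((L:ℝ)+1)^(d-1) * (σ^2 / n)) := by
    calc _ ≤ ∑ _ℓ ∈ Finset.range (L+1), ((L:ℝ)+1)^(d-1) * (σ^2 / n) :=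
          Finset.sum_le_sum hterm
      _ = ((L:ℝ)+1) * (((L:ℝ)+1)^(d-1) * (σ^2 / n)) := by
          rw [Finset.sum_const, Finset.card_range]
          push_cast [nsmul_eq_mul]
          ring
  have hpow : ((L:ℝ)+1) * (((L:ℝ)+1)^(d-1) * (σ^2 / n))
      = ((L:ℝ)+1)^d * (σ^2 / n) := by
    rw [← mul_assoc, ← pow_succ']
    congr 2
    omega
  have hxd : x ^ d = (n:ℝ) ^ ((d:ℝ)/s) := by
    rw [hxdef, ← Real.rpow_natCast ((n:ℝ) ^ (1/s)) d, ← Real.rpow_mul hn0.le]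
    ring_nf
  have hfinal : ((L:ℝ)+1)^d * (σ^2 / n) ≤ 3 ^ d * σ ^ 2 * (n : ℝ) ^ (-(2 * α) / s) := by
    have h3 : ((L:ℝ)+1)^d ≤ (3*x)^d :=
      pow_le_pow_left₀ (by positivity) hL d
    have hrw : (n : ℝ) ^ (-(2 * α) / s) = (n:ℝ) ^ ((d:ℝ)/s) / n := by
      have : -(2*α)/s = (d:ℝ)/s - 1 := by
        field_simp [hs]
        linarith [hs]
      rw [this, Real.rpow_sub hn0, Real.rpow_one]
    rw [hrw]
    have := mul_le_mul_of_nonneg_right h3 (le_of_lt (by positivity : (0:ℝ) < σ^2 / n))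
    calc ((L:ℝ)+1)^d * (σ^2 / n) ≤ (3*x)^d * (σ^2 / n) := this
      _ = 3 ^ d * σ ^ 2 * ((n:ℝ) ^ ((d:ℝ)/s) / n) := by
          rw [mul_pow, hxd]; ring
  calc _ ≤ ((L:ℝ)+1) * (((L:ℝ)+1)^(d-1) * (σ^2 / n)) := hsum
    _ = ((L:ℝ)+1)^d * (σ^2 / n) := hpow
    _ ≤ 3 ^ d * σ ^ 2 * (n : ℝ) ^ (-(2 * α) / s) := hfinal
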